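/- arXiv:2303.02224 — 2 statements merged into one kernel-verified Lean document; each statement's English description precedes it below -/
import Mathlib

section
/- For integers a ≥ b ≥ 1, the two-row partition (a,b) is a triangular partition if and only if 2b ≤ a + 1. -/
/-- A partition: a weakly decreasing finite list of positive integers. -/
def IsPartition (l : List ℕ) : Prop :=
  l.Pairwise (· ≥ ·) ∧ ∀ x ∈ l, 0 < x

/-- The cells of the diagram of `l`: the pairs `(i, j)` of positive integers with
`1 ≤ i ≤ ℓ(l)` and `1 ≤ j ≤ l_i`. -/
def cells (l : List ℕ) : Set (ℕ × ℕ) :=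
  {p | 1 ≤ p.1 ∧ p.1 ≤ l.length ∧ 1 ≤ p.2 ∧ p.2 ≤ l.getD (p.1 - 1) 0}

/-- A partition is *triangular* if there are positive reals `r`, `s` such that its cells
are exactly the pairs of positive integers `(i, j)` with `i/r + j/s ≤ 1`. -/
def IsTriangular (l : List ℕ) : Prop :=
  ∃ r s : ℝ, 0 < r ∧ 0 < s ∧
    ∀ i j : ℕ, 1 ≤ i → 1 ≤ j →
      ((i, j) ∈ cells l ↔ (i : ℝ) / r + (j : ℝ) / s ≤ 1)

/-- For integers `a ≥ b ≥ 1`, the two-row partition `(a, b)` is triangular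
if and only if `2b ≤ a + 1`. -/
theorem two_row_triangular_iff (a b : ℕ) (hb : 1 ≤ b) (hba : b ≤ a) :
    IsTriangular [a, b] ↔ 2 * b ≤ a + 1 := by
  have hbaR : (b:ℝ) ≤ a := by exact_mod_cast hba
  constructor
  · rintro ⟨r, s, hr, hs, h⟩
    have hrs : (0:ℝ) < r * s := mul_pos hr hs
    -- (2, b) is a cell
    have h2b : ((2:ℕ):ℝ)/r + (b:ℝ)/s ≤ 1 :=
      (h 2 b (by norm_num) hb).1 ⟨by norm_num, by norm_num, hb, by simp [List.getD]⟩
    push_cast at h2b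
    -- (3, 1) is not a cell
    have h31 : 1 < (3:ℝ)/r + 1/s := by
      by_contra hc
      push_neg at hc
      have := (h 3 1 (by norm_num) le_rfl).2 (by push_cast; linarith)
      simp [cells] at this
    -- (1, a+1) is not a cell
    have h1a : 1 < (1:ℝ)/r + ((a:ℝ)+1)/s := by
      by_contra hc
      push_neg at hc
      have := (h 1 (a+1) le_rfl (by omega)).2 (by push_cast; linarith)
      simp [cells, List.getD] at this
    rw [div_add_div _ _ hr.ne' hs.ne', div_le_one hrs] at h2b
    rw [div_add_div _ _ hr.ne' hs.ne', lt_div_iff₀ hrs] at h31 h1a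
    have : 2 * (b:ℝ) < a + 2 := by nlinarith [h2b, h31, h1a, hr, hs]
    have : 2 * b < a + 2 := by exact_mod_cast this
    omega
  · intro hle
    have hleR : 2 * (b:ℝ) ≤ a + 1 := by exact_mod_cast hle
    have hbR : (1:ℝ) ≤ b := by exact_mod_cast hb
    set D : ℝ := 4*a - 4*b + 2 with hDdef
    set N : ℝ := 8*a - 4*b + 5 with hNdef
    have hD : (0:ℝ) < D := by rw [hDdef]; linarith
    have hN : (0:ℝ) < N := by rw [hNdef]; linarith
    refine ⟨N/D, N/4, div_pos hN hD, div_pos hN (by norm_num), ?_⟩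
    intro i j hi hj
    have key : (i:ℝ)/(N/D) + (j:ℝ)/(N/4) = ((i:ℝ)*D + 4*j)/N := by
      field_simp
    rw [key, div_le_one hN, hDdef, hNdef]
    constructor
    · rintro ⟨-, h2, -, h4⟩
      simp only [List.length_cons, List.length_nil] at h2
      interval_cases i
      · simp only [List.getD, Nat.sub_self] at h4
        have h4' : j ≤ a := by simpa using h4
        have : (j:ℝ) ≤ a := by exact_mod_cast h4'
        push_cast
        linarith
      · have h4' : j ≤ b := by simpa [List.getD] using h4
        have : (j:ℝ) ≤ b := by exact_mod_cast h4'
        push_cast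
        linarith
    · intro hineq
      have hjR : (1:ℝ) ≤ j := by exact_mod_cast hj
      have hi2 : i ≤ 2 := by
        by_contra hcon
        push_neg at hcon
        have : (3:ℝ) ≤ i := by exact_mod_cast hcon
        nlinarith [hineq, this]
      refine ⟨hi, by simpa using hi2, hj, ?_⟩
      interval_cases i
      · have : (j:ℝ) < a + 1 := by push_cast at hineq ⊢; linarith
        have : j < a + 1 := by exact_mod_cast this
        simpa [List.getD] using Nat.lt_succ_iff.mp this
      · have : (j:ℝ) < b + 1 := by push_cast at hineq ⊢; linarith
        have : j < b + 1 := by exact_mod_cast this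
        simpa [List.getD] using Nat.lt_succ_iff.mp this
end

section
/- For integers a ≥ b ≥ 1, the two-row partition (a,b) is triangular if and only if the two-row partition (a+2, b+1) = (a,b) + δ(3) is triangular. -/
lemma mem_cells_two (u v i j : ℕ) :
    ((i, j) ∈ cells [u, v]) ↔
      (i = 1 ∧ 1 ≤ j ∧ j ≤ u) ∨ (i = 2 ∧ 1 ≤ j ∧ j ≤ v) := by
  simp only [cells, Set.mem_setOf_eq, List.length_cons, List.length_nil]
  constructor
  · rintro ⟨h1, h2, h3, h4⟩
    interval_cases i
    · left; exact ⟨rfl, h3, by simpa using h4⟩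
    · right; exact ⟨rfl, h3, by simpa using h4⟩
  · rintro (⟨rfl, h3, h4⟩ | ⟨rfl, h3, h4⟩)
    · exact ⟨le_refl 1, by norm_num, h3, by simpa using h4⟩
    · exact ⟨by norm_num, by norm_num, h3, by simpa using h4⟩

/-- The affine change of line: if `r'(r+s) = r(s+3)` and `s' = s+3`, the half-plane
conditions correspond under `(x, y) ↦ (x, x + y - 3)`. -/
lemma key_line (r s r' s' : ℝ) (hr : 0 < r) (hs : 0 < s) (hr' : 0 < r')
    (hrel : r' * (r + s) = r * (s + 3)) (hs' : s' = s + 3) :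
    ∀ x y : ℝ, x / r' + y / s' ≤ 1 ↔ x / r + (x + y - 3) / s ≤ 1 := by
  subst hs'
  intro x y
  have h3 : (0:ℝ) < s + 3 := by linarith
  have hrs : (0:ℝ) < r + s := by linarith
  have e1 : r' * (r + s) * y = r * (s + 3) * y := by rw [hrel]
  have e2 : r' * (r + s) * (s + 3) = r * (s + 3) * (s + 3) := by rw [hrel]
  rw [div_add_div _ _ hr'.ne' h3.ne', div_le_one (by positivity),
      div_add_div _ _ hr.ne' hs.ne', div_le_one (by positivity)]
  constructor <;> intro h
  · nlinarith [mul_le_mul_of_nonneg_right h hrs.le, e1, e2, h3, hrs]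
  · nlinarith [mul_le_mul_of_nonneg_right h h3.le, e1, e2, h3, hrs]

/-- For `a ≥ b ≥ 1`, the two-row partition `(a, b)` is triangular iff
`(a, b) + δ(3) = (a + 2, b + 1)` is triangular. -/
theorem two_row_triangular_iff_add_delta (a b : ℕ) (hb : 1 ≤ b) (hba : b ≤ a) :
    IsTriangular [a, b] ↔ IsTriangular [a + 2, b + 1] := by
  constructor
  · rintro ⟨r, s, hr, hs, heq⟩
    have hA : ∀ j : ℕ, 1 ≤ j → (j ≤ a ↔ (1:ℝ)/r + (j:ℝ)/s ≤ 1) := by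
      intro j hj
      have h := heq 1 j le_rfl hj
      rw [mem_cells_two] at h
      constructor
      · intro hja
        have := h.mp (Or.inl ⟨rfl, hj, hja⟩)
        push_cast at this; exact this
      · intro hle
        have := h.mpr (by push_cast; exact hle)
        rcases this with ⟨-, -, h'⟩ | ⟨h', -⟩ <;> omega
    have hB : ∀ j : ℕ, 1 ≤ j → (j ≤ b ↔ (2:ℝ)/r + (j:ℝ)/s ≤ 1) := by
      intro j hj
      have h := heq 2 j (by norm_num) hj
      rw [mem_cells_two] at h
      constructor
      · intro hjb
        have := h.mp (Or.inr ⟨rfl, hj, hjb⟩)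
        push_cast at this; exact this
      · intro hle
        have := h.mpr (by push_cast; exact hle)
        rcases this with ⟨h', -⟩ | ⟨-, -, h'⟩ <;> omega
    have h31 : ¬ ((3:ℝ)/r + 1/s ≤ 1) := by
      intro h
      have := (heq 3 1 (by norm_num) le_rfl).mpr (by push_cast; exact h)
      rw [mem_cells_two] at this; omega
    have h11 : (1:ℝ)/r + 1/s ≤ 1 := by
      have := (hA 1 le_rfl).mp (by omega); push_cast at this; exact this
    have h21 : (2:ℝ)/r + 1/s ≤ 1 := by
      have := (hB 1 le_rfl).mp hb; push_cast at this; exact this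
    refine ⟨r * (s + 3) / (r + s), s + 3, by positivity, by linarith, ?_⟩
    have hrel : (r * (s + 3) / (r + s)) * (r + s) = r * (s + 3) := by
      field_simp
    have hkey := key_line r s (r * (s + 3) / (r + s)) (s + 3) hr hs (by positivity) hrel rfl
    intro i j hi hj
    rw [hkey, mem_cells_two]
    rcases Nat.lt_or_ge i 3 with hilt | hige
    · interval_cases i
      · -- i = 1
        by_cases h3j : 3 ≤ j
        · have h := hA (j - 2) (by omega)
          have hcast : ((j - 2 : ℕ) : ℝ) = (j : ℝ) - 2 := by
            push_cast [Nat.cast_sub (show 2 ≤ j by omega)]; ring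
          rw [hcast] at h
          constructor
          · rintro (⟨-, -, hja⟩ | ⟨h2, -⟩)
            · have := h.mp (by omega)
              push_cast
              have e : ((1:ℝ) + (j:ℝ) - 3)/s = ((j:ℝ) - 2)/s := by ring
              linarith
            · exact absurd h2 (by norm_num)
          · intro hle
            refine Or.inl ⟨rfl, hj, ?_⟩
            push_cast at hle
            have e : ((1:ℝ) + (j:ℝ) - 3)/s = ((j:ℝ) - 2)/s := by ring
            have := h.mpr (by linarith)
            omega
        · constructor
          · intro _
            push_cast
            have hj2 : (j : ℝ) ≤ 2 := by exact_mod_cast (show j ≤ 2 by omega)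
            have : ((1:ℝ) + (j:ℝ) - 3)/s ≤ 1/s := by gcongr; linarith
            linarith
          · intro _; exact Or.inl ⟨rfl, hj, by omega⟩
      · -- i = 2
        by_cases h2j : 2 ≤ j
        · have h := hB (j - 1) (by omega)
          have hcast : ((j - 1 : ℕ) : ℝ) = (j : ℝ) - 1 := by
            push_cast [Nat.cast_sub (show 1 ≤ j by omega)]; ring
          rw [hcast] at h
          constructor
          · rintro (⟨h2, -⟩ | ⟨-, -, hjb⟩)
            · exact absurd h2 (by norm_num)
            · have := h.mp (by omega)
              push_cast
              have e : ((2:ℝ) + (j:ℝ) - 3)/s = ((j:ℝ) - 1)/s := by ring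
              linarith
          · intro hle
            refine Or.inr ⟨rfl, hj, ?_⟩
            push_cast at hle
            have e : ((2:ℝ) + (j:ℝ) - 3)/s = ((j:ℝ) - 1)/s := by ring
            have := h.mpr (by linarith)
            omega
        · constructor
          · intro _
            push_cast
            have hj1 : j = 1 := by omega
            subst hj1
            have h1s : 0 < 1/s := by positivity
            norm_num
            linarith
          · intro _; exact Or.inr ⟨rfl, hj, by omega⟩
    · -- i ≥ 3 : both sides false
      have hi3 : (3:ℝ) ≤ (i:ℝ) := by exact_mod_cast hige
      have hj1 : (1:ℝ) ≤ (j:ℝ) := by exact_mod_cast hj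
      constructor
      · rintro (⟨h2, -⟩ | ⟨h2, -⟩) <;> omega
      · intro hle
        exfalso
        apply h31
        have : (3:ℝ)/r + 1/s ≤ (i:ℝ)/r + ((i:ℝ) + (j:ℝ) - 3)/s := by
          gcongr
          linarith
        linarith
  · rintro ⟨r', s', hr', hs', heq⟩
    have hA : ∀ j : ℕ, 1 ≤ j → (j ≤ a + 2 ↔ (1:ℝ)/r' + (j:ℝ)/s' ≤ 1) := by
      intro j hj
      have h := heq 1 j le_rfl hj
      rw [mem_cells_two] at h
      constructor
      · intro hja
        have := h.mp (Or.inl ⟨rfl, hj, hja⟩)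
        push_cast at this; exact this
      · intro hle
        have := h.mpr (by push_cast; exact hle)
        rcases this with ⟨-, -, h'⟩ | ⟨h', -⟩ <;> omega
    have hB : ∀ j : ℕ, 1 ≤ j → (j ≤ b + 1 ↔ (2:ℝ)/r' + (j:ℝ)/s' ≤ 1) := by
      intro j hj
      have h := heq 2 j (by norm_num) hj
      rw [mem_cells_two] at h
      constructor
      · intro hjb
        have := h.mp (Or.inr ⟨rfl, hj, hjb⟩)
        push_cast at this; exact this
      · intro hle
        have := h.mpr (by push_cast; exact hle)
        rcases this with ⟨h', -⟩ | ⟨-, -, h'⟩ <;> omega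
    have h31 : ¬ ((3:ℝ)/r' + 1/s' ≤ 1) := by
      intro h
      have := (heq 3 1 (by norm_num) le_rfl).mpr (by push_cast; exact h)
      rw [mem_cells_two] at this; omega
    have h13 : (1:ℝ)/r' + 3/s' ≤ 1 := by
      have := (hA 3 (by norm_num)).mp (by omega); push_cast at this; exact this
    have h22 : (2:ℝ)/r' + 2/s' ≤ 1 := by
      have := (hB 2 (by norm_num)).mp (by omega); push_cast at this; exact this
    have h31' : (1:ℝ) < 3/r' + 1/s' := not_le.mp h31
    have hinvr : (0:ℝ) < 1/r' := by positivity
    have hinvs : (0:ℝ) < 1/s' := by positivity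
    have er3 : (3:ℝ)/r' = 3*(1/r') := by ring
    have er2 : (2:ℝ)/r' = 2*(1/r') := by ring
    have es3 : (3:ℝ)/s' = 3*(1/s') := by ring
    have es2 : (2:ℝ)/s' = 2*(1/s') := by ring
    have es4 : (4:ℝ)/s' = 4*(1/s') := by ring
    have hs4 : (4:ℝ) < s' := by
      have e3 : (4:ℝ)/s' < 1 := by linarith
      exact (div_lt_one hs').mp e3
    have hrs : r' < s' := by
      have hvu : (1:ℝ)/s' < 1/r' := by linarith
      by_contra hc
      push_neg at hc
      have := one_div_le_one_div_of_le hs' hc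
      linarith
    set s : ℝ := s' - 3 with hsdef
    set r : ℝ := r' * (s' - 3) / (s' - r') with hrdef
    have hs0 : 0 < s := by simp only [hsdef]; linarith
    have hr0 : 0 < r := div_pos (mul_pos hr' (by linarith)) (by linarith)
    have hrel : r' * (r + s) = r * (s + 3) := by
      simp only [hrdef, hsdef]
      have hne : s' - r' ≠ 0 := by linarith
      field_simp
      ring
    have hs'eq : s' = s + 3 := by simp only [hsdef]; ring
    have hkey := key_line r s r' s' hr0 hs0 hr' hrel hs'eq
    refine ⟨r, s, hr0, hs0, ?_⟩
    intro i j hi hj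
    rw [mem_cells_two]
    rcases Nat.lt_or_ge i 3 with hilt | hige
    · interval_cases i
      · -- i = 1
        have h := hA (j + 2) (by omega)
        have hk := hkey 1 ((j:ℝ) + 2)
        have harg : (1:ℝ) + ((j:ℝ) + 2) - 3 = (j:ℝ) := by ring
        rw [harg] at hk
        constructor
        · intro hja
          rcases hja with ⟨-, -, hja⟩ | ⟨h2, -⟩
          · have := h.mp (by omega)
            push_cast at this
            have := hk.mp this
            push_cast
            linarith
          · exact absurd h2 (by norm_num)
        · intro hle
          refine Or.inl ⟨rfl, hj, ?_⟩
          push_cast at hle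
          have := h.mpr (by push_cast; exact hk.mpr (by linarith))
          omega
      · -- i = 2
        have h := hB (j + 1) (by omega)
        have hk := hkey 2 ((j:ℝ) + 1)
        have harg : (2:ℝ) + ((j:ℝ) + 1) - 3 = (j:ℝ) := by ring
        rw [harg] at hk
        constructor
        · intro hjb
          rcases hjb with ⟨h2, -⟩ | ⟨-, -, hjb⟩
          · exact absurd h2 (by norm_num)
          · have := h.mp (by omega)
            push_cast at this
            have := hk.mp this
            push_cast
            linarith
        · intro hle
          refine Or.inr ⟨rfl, hj, ?_⟩
          push_cast at hle
          have := h.mpr (by push_cast; exact hk.mpr (by linarith))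
          omega
    · -- i ≥ 3 : both sides false
      have hi3 : (3:ℝ) ≤ (i:ℝ) := by exact_mod_cast hige
      have hj1 : (1:ℝ) ≤ (j:ℝ) := by exact_mod_cast hj
      constructor
      · rintro (⟨h2, -⟩ | ⟨h2, -⟩) <;> omega
      · intro hle
        exfalso
        apply h31
        have hk := hkey 3 1
        have harg : (3:ℝ) + 1 - 3 = (1:ℝ) := by ring
        rw [harg] at hk
        have hmono : (3:ℝ)/r + 1/s ≤ (i:ℝ)/r + (j:ℝ)/s := by gcongr
        exact hk.mpr (by linarith)
end
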